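/- Let A be a unital B_0-algebra with an orthogonal basis (e_n). If x = Σ t_n e_n ∈ A where t_n are real, t_n ≤ t_{n+1}, and t_n → ∞, then f(x) is real for every nonzero multiplicative linear functional f on A. -/

import Mathlib

open Filter Topology Uniformity
set_option linter.unusedSectionVars false

/-- `x = Σ_{n} a n • e n` as convergence of ordered partial sums. -/
def HasExpansion {A : Type*} [AddCommMonoid A] [Module ℂ A] [TopologicalSpace A]
    (a : ℕ → ℂ) (e : ℕ → A) (x : A) : Prop :=
  Tendsto (fun N => ∑ n ∈ Finset.range N, a n • e n) atTop (𝓝 x)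

section Aux

variable {A : Type*} [Ring A] [Algebra ℂ A] [UniformSpace A] [T2Space A]
    [IsUniformAddGroup A] [ContinuousSMul ℂ A] [CompleteSpace A]
    {p : ℕ → Seminorm ℂ A}

lemma seminorm_sum_le (q : Seminorm ℂ A) (s : Finset ℕ) (f : ℕ → A) :
    q (∑ k ∈ s, f k) ≤ ∑ k ∈ s, q (f k) := by
  induction s using Finset.cons_induction with
  | empty => simp
  | cons a s ha ih =>
    rw [Finset.sum_cons, Finset.sum_cons]
    exact le_trans (map_add_le_add _ _ _) (add_le_add_right ih _)

lemma aux_tendsto_iff (hp : WithSeminorms p) (u : ℕ → A) (y : A) :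
    Tendsto u atTop (𝓝 y) ↔ ∀ i, Tendsto (fun N => p i (u N - y)) atTop (𝓝 0) := by
  rw [hp.tendsto_nhds_atTop]
  refine forall_congr' fun i => ?_
  rw [Metric.tendsto_atTop]
  constructor
  · intro h ε hε
    obtain ⟨N, hN⟩ := h ε hε
    refine ⟨N, fun n hn => ?_⟩
    rw [Real.dist_eq, sub_zero, abs_of_nonneg (apply_nonneg _ _)]
    exact hN n hn
  · intro h ε hε
    obtain ⟨N, hN⟩ := h ε hε
    refine ⟨N, fun n hn => ?_⟩
    have := hN n hn
    rwa [Real.dist_eq, sub_zero, abs_of_nonneg (apply_nonneg _ _)] at this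

lemma aux_cauchy (hp : WithSeminorms p) (u : ℕ → A)
    (h : ∀ i : ℕ, ∀ ε > 0, ∃ N, ∀ m n, N ≤ m → N ≤ n → p i (u n - u m) < ε) :
    CauchySeq u := by
  have hb : (𝓤 A).HasBasis (fun sr : Finset ℕ × ℝ => 0 < sr.2)
      (fun sr => (fun x : A × A => x.2 - x.1) ⁻¹' (sr.1.sup p).ball 0 sr.2) := by
    rw [uniformity_eq_comap_nhds_zero A]
    exact hp.hasBasis_zero_ball.comap _
  rw [hb.cauchySeq_iff]
  rintro ⟨s, r⟩ hr
  choose N hN using fun i => h i r hr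
  refine ⟨s.sup N, fun m hm n hn => ?_⟩
  simp only [Set.mem_preimage, Seminorm.mem_ball_zero]
  exact Seminorm.finset_sup_apply_lt hr fun i hi =>
    hN i m n (le_trans (Finset.le_sup hi) hm) (le_trans (Finset.le_sup hi) hn)

lemma aux_prod_sum (e : ℕ → A) (horth : ∀ i j, e i * e j = if i = j then e i else 0)
    (a b : ℕ → ℂ) (N : ℕ) :
    (∑ n ∈ Finset.range N, a n • e n) * (∑ n ∈ Finset.range N, b n • e n)
      = ∑ n ∈ Finset.range N, (a n * b n) • e n := by
  rw [Finset.sum_mul_sum]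
  refine Finset.sum_congr rfl fun i hi => ?_
  calc ∑ j ∈ Finset.range N, (a i • e i) * (b j • e j)
      = ∑ j ∈ Finset.range N, if i = j then (a i * b j) • e i else 0 := by
        refine Finset.sum_congr rfl fun j _ => ?_
        rw [smul_mul_smul_comm, horth]
        split_ifs <;> simp
    _ = (a i * b i) • e i := by
        rw [Finset.sum_ite_eq]
        simp [Finset.mem_range.1 hi]

lemma aux_abel (a : ℕ → A) (w : ℕ → ℂ) (m l : ℕ) :
    ∑ k ∈ Finset.Ico m (m + l + 1), w k • a k
      = (∑ k ∈ Finset.Ico m (m + l), (w k - w (k + 1)) • ∑ j ∈ Finset.Ico m (k + 1), a j)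
        + w (m + l) • ∑ j ∈ Finset.Ico m (m + l + 1), a j := by
  induction l with
  | zero => simp
  | succ l ih =>
    have e1 : m ≤ m + l := by omega
    have e2 : m ≤ m + l + 1 := by omega
    rw [show m + (l + 1) + 1 = m + l + 1 + 1 from rfl, show m + (l + 1) = m + l + 1 from rfl,
        Finset.sum_Ico_succ_top e2 (fun k => w k • a k), ih,
        Finset.sum_Ico_succ_top e1 (fun k => (w k - w (k + 1)) • ∑ j ∈ Finset.Ico m (k + 1), a j),
        Finset.sum_Ico_succ_top e2 a]
    rw [sub_smul, smul_add]
    abel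

/-- A "good weight" : total variation plus last term on tails is arbitrarily small. -/
def GoodWeight (w : ℕ → ℂ) : Prop :=
  ∀ ε > 0, ∃ M : ℕ, ∀ m l : ℕ, M ≤ m →
    (∑ k ∈ Finset.Ico m (m + l), ‖w k - w (k + 1)‖) + ‖w (m + l)‖ < ε

lemma aux_telescope (g : ℕ → ℝ) (m l : ℕ) :
    ∑ k ∈ Finset.Ico m (m + l), (g k - g (k + 1)) = g m - g (m + l) := by
  induction l with
  | zero => simp
  | succ l ih =>
    rw [show m + (l + 1) = (m + l) + 1 from rfl,
        Finset.sum_Ico_succ_top (by omega : m ≤ m + l), ih]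
    ring

lemma aux_good_resolvent (t : ℕ → ℝ) (ht : Monotone t) (htop : Tendsto t atTop atTop) (μ : ℂ) :
    GoodWeight (fun k => ((t k : ℂ) - μ)⁻¹) := by
  intro ε hε
  obtain ⟨M, hM⟩ := eventually_atTop.1 (htop.eventually_ge_atTop (μ.re + max 1 (2 / ε)))
  set a := μ.re with ha
  have hta : ∀ k, M ≤ k → max 1 (2 / ε) ≤ t k - a := by
    intro k hk; have := hM k hk; linarith
  have hpos : ∀ k, M ≤ k → 0 < t k - a := fun k hk =>
    lt_of_lt_of_le (lt_of_lt_of_le one_pos (le_max_left _ _)) (hta k hk)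
  have hnorm : ∀ k, M ≤ k → t k - a ≤ ‖(t k : ℂ) - μ‖ := by
    intro k hk
    calc t k - a = ((t k : ℂ) - μ).re := by simp [Complex.sub_re, ha]
      _ ≤ ‖(t k : ℂ) - μ‖ := by
          exact Complex.re_le_norm _
  have hz : ∀ k, M ≤ k → ((t k : ℂ) - μ) ≠ 0 := by
    intro k hk h0
    have := hnorm k hk
    rw [h0, norm_zero] at this
    exact absurd (lt_of_lt_of_le (hpos k hk) this) (lt_irrefl 0)
  have hwle : ∀ k, M ≤ k → ‖((t k : ℂ) - μ)⁻¹‖ ≤ (t k - a)⁻¹ := by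
    intro k hk
    rw [norm_inv]
    exact inv_anti₀ (hpos k hk) (hnorm k hk)
  have hΔ : ∀ k, M ≤ k → ‖((t k : ℂ) - μ)⁻¹ - ((t (k + 1) : ℂ) - μ)⁻¹‖
      ≤ (t k - a)⁻¹ - (t (k + 1) - a)⁻¹ := by
    intro k hk
    have hk1 : M ≤ k + 1 := by omega
    have hA := hz k hk
    have hB := hz (k + 1) hk1
    have htk : t k ≤ t (k + 1) := ht (Nat.le_succ k)
    rw [inv_sub_inv hA hB]
    rw [norm_div, norm_mul]
    have hnum : ‖((t (k + 1) : ℂ) - μ) - ((t k : ℂ) - μ)‖ = t (k + 1) - t k := by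
      have : ((t (k + 1) : ℂ) - μ) - ((t k : ℂ) - μ) = ((t (k + 1) - t k : ℝ) : ℂ) := by
        push_cast; ring
      rw [this, Complex.norm_real, Real.norm_eq_abs, abs_of_nonneg (by linarith)]
    rw [hnum]
    have h1 : (t (k + 1) - t k) / (‖(t k : ℂ) - μ‖ * ‖(t (k + 1) : ℂ) - μ‖)
        ≤ (t (k + 1) - t k) / ((t k - a) * (t (k + 1) - a)) := by
      have hd1 : 0 < (t k - a) * (t (k + 1) - a) :=
        mul_pos (hpos k hk) (hpos (k + 1) hk1)
      have hd2 : (t k - a) * (t (k + 1) - a) ≤ ‖(t k : ℂ) - μ‖ * ‖(t (k + 1) : ℂ) - μ‖ :=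
        mul_le_mul (hnorm k hk) (hnorm (k + 1) hk1) (hpos (k + 1) hk1).le (norm_nonneg _)
      exact div_le_div_of_nonneg_left (by linarith) hd1 hd2
    refine h1.trans (le_of_eq ?_)
    rw [inv_sub_inv (ne_of_gt (hpos k hk)) (ne_of_gt (hpos (k + 1) hk1))]
    congr 1
    ring
  refine ⟨M, fun m l hm => ?_⟩
  have hml : M ≤ m + l := by omega
  calc (∑ k ∈ Finset.Ico m (m + l), ‖((t k : ℂ) - μ)⁻¹ - ((t (k + 1) : ℂ) - μ)⁻¹‖)
        + ‖((t (m + l) : ℂ) - μ)⁻¹‖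
      ≤ (∑ k ∈ Finset.Ico m (m + l), ((t k - a)⁻¹ - (t (k + 1) - a)⁻¹)) + (t (m + l) - a)⁻¹ := by
        gcongr with k hk
        · exact hΔ k (le_trans hm (Finset.mem_Ico.1 hk).1)
        · exact hwle (m + l) hml
    _ = (t m - a)⁻¹ := by rw [aux_telescope (fun k => (t k - a)⁻¹) m l]; ring
    _ ≤ (2 / ε)⁻¹ := by
        apply inv_anti₀ (by positivity)
        exact le_trans (le_max_right _ _) (hta m hm)
    _ = ε / 2 := by rw [inv_div]
    _ < ε := by linarith

lemma aux_good_comb (c : ℂ) (u v : ℕ → ℂ) (hu : GoodWeight u) (hv : GoodWeight v) :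
    GoodWeight (fun k => c * (u k - v k)) := by
  intro ε hε
  have hc1 : (0:ℝ) < ‖c‖ + 1 := by positivity
  obtain ⟨M1, h1⟩ := hu (ε / (2 * (‖c‖ + 1))) (by positivity)
  obtain ⟨M2, h2⟩ := hv (ε / (2 * (‖c‖ + 1))) (by positivity)
  refine ⟨max M1 M2, fun m l hm => ?_⟩
  have hm1 : M1 ≤ m := le_trans (le_max_left _ _) hm
  have hm2 : M2 ≤ m := le_trans (le_max_right _ _) hm
  have key : (∑ k ∈ Finset.Ico m (m + l), ‖c * (u k - v k) - c * (u (k + 1) - v (k + 1))‖)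
      + ‖c * (u (m + l) - v (m + l))‖
      ≤ ‖c‖ * (((∑ k ∈ Finset.Ico m (m + l), ‖u k - u (k + 1)‖) + ‖u (m + l)‖)
        + ((∑ k ∈ Finset.Ico m (m + l), ‖v k - v (k + 1)‖) + ‖v (m + l)‖)) := by
    have hterm : ∀ k, ‖c * (u k - v k) - c * (u (k + 1) - v (k + 1))‖
        ≤ ‖c‖ * (‖u k - u (k + 1)‖ + ‖v k - v (k + 1)‖) := by
      intro k
      have : c * (u k - v k) - c * (u (k + 1) - v (k + 1))
          = c * ((u k - u (k + 1)) - (v k - v (k + 1))) := by ring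
      rw [this, norm_mul]
      exact mul_le_mul_of_nonneg_left (norm_sub_le _ _) (norm_nonneg _)
    have hlast : ‖c * (u (m + l) - v (m + l))‖ ≤ ‖c‖ * (‖u (m + l)‖ + ‖v (m + l)‖) := by
      rw [norm_mul]
      exact mul_le_mul_of_nonneg_left (norm_sub_le _ _) (norm_nonneg _)
    calc (∑ k ∈ Finset.Ico m (m + l), ‖c * (u k - v k) - c * (u (k + 1) - v (k + 1))‖)
        + ‖c * (u (m + l) - v (m + l))‖
        ≤ (∑ k ∈ Finset.Ico m (m + l), ‖c‖ * (‖u k - u (k + 1)‖ + ‖v k - v (k + 1)‖))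
          + ‖c‖ * (‖u (m + l)‖ + ‖v (m + l)‖) := by
          gcongr with k hk
          · exact hterm k
      _ = ‖c‖ * (((∑ k ∈ Finset.Ico m (m + l), ‖u k - u (k + 1)‖) + ‖u (m + l)‖)
          + ((∑ k ∈ Finset.Ico m (m + l), ‖v k - v (k + 1)‖) + ‖v (m + l)‖)) := by
          rw [← Finset.mul_sum, Finset.sum_add_distrib]
          ring
  have hsum : ((∑ k ∈ Finset.Ico m (m + l), ‖u k - u (k + 1)‖) + ‖u (m + l)‖)
      + ((∑ k ∈ Finset.Ico m (m + l), ‖v k - v (k + 1)‖) + ‖v (m + l)‖)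
      < ε / (‖c‖ + 1) := by
    have := h1 m l hm1
    have := h2 m l hm2
    have : ε / (2 * (‖c‖ + 1)) + ε / (2 * (‖c‖ + 1)) = ε / (‖c‖ + 1) := by
      field_simp; ring
    linarith
  calc (∑ k ∈ Finset.Ico m (m + l), ‖c * (u k - v k) - c * (u (k + 1) - v (k + 1))‖)
      + ‖c * (u (m + l) - v (m + l))‖
      ≤ ‖c‖ * (((∑ k ∈ Finset.Ico m (m + l), ‖u k - u (k + 1)‖) + ‖u (m + l)‖)
        + ((∑ k ∈ Finset.Ico m (m + l), ‖v k - v (k + 1)‖) + ‖v (m + l)‖)) := key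
    _ ≤ (‖c‖ + 1) * (((∑ k ∈ Finset.Ico m (m + l), ‖u k - u (k + 1)‖) + ‖u (m + l)‖)
        + ((∑ k ∈ Finset.Ico m (m + l), ‖v k - v (k + 1)‖) + ‖v (m + l)‖)) := by
        have hnn : (0:ℝ) ≤ ((∑ k ∈ Finset.Ico m (m + l), ‖u k - u (k + 1)‖) + ‖u (m + l)‖)
          + ((∑ k ∈ Finset.Ico m (m + l), ‖v k - v (k + 1)‖) + ‖v (m + l)‖) := by positivity
        nlinarith [norm_nonneg c]
    _ < (‖c‖ + 1) * (ε / (‖c‖ + 1)) := by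
        exact mul_lt_mul_of_pos_left hsum hc1
    _ = ε := by field_simp

lemma aux_conv (hp : WithSeminorms p) (e : ℕ → A) (t : ℕ → ℝ) (x : A)
    (hx : HasExpansion (fun n => (t n : ℂ)) e x)
    (c w : ℕ → ℂ) (N0 : ℕ) (hc : ∀ k, N0 ≤ k → c k = w k * t k) (hw : GoodWeight w) :
    ∃ z : A, HasExpansion c e z := by
  have hcs : CauchySeq (fun N => ∑ n ∈ Finset.range N, c n • e n) := by
    apply aux_cauchy hp
    intro i ε hε
    have hX := ((aux_tendsto_iff hp _ x).1 hx) i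
    obtain ⟨M1, hM1⟩ := Metric.tendsto_atTop.1 hX 1 one_pos
    have hXb : ∀ j, M1 ≤ j → p i ((∑ n ∈ Finset.range j, (t n : ℂ) • e n) - x) < 1 := by
      intro j hj
      have := hM1 j hj
      rwa [Real.dist_eq, sub_zero, abs_of_nonneg (apply_nonneg _ _)] at this
    obtain ⟨M2, hM2⟩ := hw (ε / 3) (by positivity)
    set X : ℕ → A := fun N => ∑ n ∈ Finset.range N, (t n : ℂ) • e n with hXdef
    have hseg : ∀ j k, M1 ≤ j → M1 ≤ k → p i (X k - X j) ≤ 2 := by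
      intro j k hj hk
      have : X k - X j = (X k - x) - (X j - x) := by abel
      rw [this]
      exact le_trans (map_sub_le_add _ _ _) (by
        have := hXb k hk; have := hXb j hj; linarith)
    set NN := max (max M1 M2) N0 with hNN
    have key : ∀ m n, NN ≤ m → m < n →
        p i ((∑ k ∈ Finset.range n, c k • e k) - ∑ k ∈ Finset.range m, c k • e k) < ε := by
      intro m n hm hmn
      have hmM1 : M1 ≤ m := le_trans (le_trans (le_max_left _ _) (le_max_left _ _)) hm
      have hmM2 : M2 ≤ m := le_trans (le_trans (le_max_right _ _) (le_max_left _ _)) hm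
      have hmN0 : N0 ≤ m := le_trans (le_max_right _ _) hm
      rw [← Finset.sum_Ico_eq_sub _ hmn.le]
      have hsum : ∑ k ∈ Finset.Ico m n, c k • e k
          = ∑ k ∈ Finset.Ico m n, w k • ((t k : ℂ) • e k) := by
        refine Finset.sum_congr rfl fun k hk => ?_
        rw [hc k (le_trans hmN0 (Finset.mem_Ico.1 hk).1), mul_smul]
      obtain ⟨l, rfl⟩ : ∃ l, n = m + l + 1 := ⟨n - m - 1, by omega⟩
      rw [hsum, aux_abel]
      have hA : ∀ k, k ∈ Finset.Ico m (m + l) →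
          p i ((w k - w (k + 1)) • ∑ j ∈ Finset.Ico m (k + 1), (t j : ℂ) • e j)
            ≤ ‖w k - w (k + 1)‖ * 2 := by
        intro k hk
        have hmk : m ≤ k := (Finset.mem_Ico.1 hk).1
        rw [map_smul_eq_mul]
        refine mul_le_mul_of_nonneg_left ?_ (norm_nonneg _)
        rw [Finset.sum_Ico_eq_sub _ (by omega : m ≤ k + 1)]
        exact hseg m (k + 1) hmM1 (by omega)
      have hB : p i (w (m + l) • ∑ j ∈ Finset.Ico m (m + l + 1), (t j : ℂ) • e j)
          ≤ ‖w (m + l)‖ * 2 := by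
        rw [map_smul_eq_mul]
        refine mul_le_mul_of_nonneg_left ?_ (norm_nonneg _)
        rw [Finset.sum_Ico_eq_sub _ (by omega : m ≤ m + l + 1)]
        exact hseg m (m + l + 1) hmM1 (by omega)
      calc p i ((∑ k ∈ Finset.Ico m (m + l),
              (w k - w (k + 1)) • ∑ j ∈ Finset.Ico m (k + 1), (t j : ℂ) • e j)
            + w (m + l) • ∑ j ∈ Finset.Ico m (m + l + 1), (t j : ℂ) • e j)
          ≤ p i (∑ k ∈ Finset.Ico m (m + l),
              (w k - w (k + 1)) • ∑ j ∈ Finset.Ico m (k + 1), (t j : ℂ) • e j)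
            + p i (w (m + l) • ∑ j ∈ Finset.Ico m (m + l + 1), (t j : ℂ) • e j) :=
            map_add_le_add _ _ _
        _ ≤ (∑ k ∈ Finset.Ico m (m + l), ‖w k - w (k + 1)‖ * 2) + ‖w (m + l)‖ * 2 := by
            gcongr
            · exact le_trans (seminorm_sum_le _ _ _) (Finset.sum_le_sum hA)
        _ = 2 * ((∑ k ∈ Finset.Ico m (m + l), ‖w k - w (k + 1)‖) + ‖w (m + l)‖) := by
            rw [← Finset.sum_mul]; ring
        _ < 2 * (ε / 3) := by
            have := hM2 m l hmM2
            linarith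
        _ < ε := by linarith
    refine ⟨NN, fun m n hm hn => ?_⟩
    rcases lt_trichotomy m n with h | h | h
    · exact key m n hm h
    · subst h; simpa using hε
    · rw [map_sub_rev]
      exact key n m hn h
  obtain ⟨z, hz⟩ := cauchySeq_tendsto_of_complete hcs
  exact ⟨z, hz⟩

lemma aux_mul (hp : WithSeminorms p)
    (hsub : ∀ i x y, p i (x * y) ≤ p (i + 1) x * p (i + 1) y)
    (e : ℕ → A) (horth : ∀ i j, e i * e j = if i = j then e i else 0)
    (a b : ℕ → ℂ) (y z : A) (ha : HasExpansion a e y) (hb : HasExpansion b e z) :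
    HasExpansion (fun k => a k * b k) e (y * z) := by
  set P : ℕ → A := fun N => ∑ n ∈ Finset.range N, a n • e n with hP
  set Q : ℕ → A := fun N => ∑ n ∈ Finset.range N, b n • e n with hQ
  have hPQ : ∀ N, (∑ n ∈ Finset.range N, (a n * b n) • e n) = P N * Q N :=
    fun N => (aux_prod_sum e horth a b N).symm
  rw [HasExpansion, aux_tendsto_iff hp]
  intro i
  have hF : Tendsto (fun N => p (i + 1) (P N - y)) atTop (𝓝 0) :=
    ((aux_tendsto_iff hp _ y).1 ha) (i + 1)
  have hG : Tendsto (fun N => p (i + 1) (Q N - z)) atTop (𝓝 0) :=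
    ((aux_tendsto_iff hp _ z).1 hb) (i + 1)
  have hbound : ∀ N, p i ((∑ n ∈ Finset.range N, (a n * b n) • e n) - y * z)
      ≤ p (i + 1) (P N - y) * (p (i + 1) z + p (i + 1) (Q N - z))
        + p (i + 1) y * p (i + 1) (Q N - z) := by
    intro N
    have hdecomp : P N * Q N - y * z = (P N - y) * Q N + y * (Q N - z) := by
      rw [sub_mul, mul_sub]; abel
    have hQb : p (i + 1) (Q N) ≤ p (i + 1) z + p (i + 1) (Q N - z) := by
      have hqz : Q N = z + (Q N - z) := by abel
      calc p (i + 1) (Q N) = p (i + 1) (z + (Q N - z)) := by rw [← hqz]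
        _ ≤ p (i + 1) z + p (i + 1) (Q N - z) := map_add_le_add _ _ _
    calc p i ((∑ n ∈ Finset.range N, (a n * b n) • e n) - y * z)
        = p i ((P N - y) * Q N + y * (Q N - z)) := by rw [hPQ N, hdecomp]
      _ ≤ p i ((P N - y) * Q N) + p i (y * (Q N - z)) := map_add_le_add _ _ _
      _ ≤ p (i + 1) (P N - y) * p (i + 1) (Q N) + p (i + 1) y * p (i + 1) (Q N - z) :=
          add_le_add (hsub i _ _) (hsub i _ _)
      _ ≤ p (i + 1) (P N - y) * (p (i + 1) z + p (i + 1) (Q N - z))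
          + p (i + 1) y * p (i + 1) (Q N - z) :=
          add_le_add_left (mul_le_mul_of_nonneg_left hQb (apply_nonneg _ _)) _
  have hlim : Tendsto (fun N => p (i + 1) (P N - y) * (p (i + 1) z + p (i + 1) (Q N - z))
      + p (i + 1) y * p (i + 1) (Q N - z)) atTop (𝓝 0) := by
    have := (hF.mul ((tendsto_const_nhds (x := p (i + 1) z)).add hG)).add
      ((tendsto_const_nhds (x := p (i + 1) y)).mul hG)
    simpa using this
  exact squeeze_zero (fun N => apply_nonneg _ _) hbound hlim

end Aux

/-- If x = Σ tₙ eₙ with tₙ real increasing to ∞, then f x is real for any nonzero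
multiplicative linear functional f. -/
theorem stmt6 {A : Type*} [Ring A] [Algebra ℂ A] [UniformSpace A] [T2Space A]
    [IsUniformAddGroup A] [ContinuousSMul ℂ A] [CompleteSpace A]
    (p : ℕ → Seminorm ℂ A) (hp : WithSeminorms p)
    (hmono : ∀ i x, p i x ≤ p (i + 1) x)
    (hsub : ∀ i x y, p i (x * y) ≤ p (i + 1) x * p (i + 1) y)
    (e : ℕ → A) (coef : A → ℕ → ℂ)
    (horth : ∀ i j, e i * e j = if i = j then e i else 0)
    (hbasis : ∀ x, HasExpansion (coef x) e x)
    (huniq : ∀ x a, HasExpansion a e x → a = coef x)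
    (t : ℕ → ℝ) (ht : Monotone t) (htop : Tendsto t atTop atTop)
    (x : A) (hx : HasExpansion (fun n => (t n : ℂ)) e x)
    (f : A → ℂ) (hf : IsLinearMap ℂ f) (hfm : ∀ y z, f (y * z) = f y * f z)
    (hfne : f ≠ 0) :
    (f x).im = 0 := by
  by_contra him
  set lam := f x with hlam
  have hlamim : lam.im ≠ 0 := him
  have hlam0 : lam ≠ 0 := fun h => hlamim (by rw [h]; simp)
  have hne : ∀ k, ((t k : ℂ) - lam) ≠ 0 := by
    intro k h0
    apply hlamim
    have h1 := congrArg Complex.im h0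
    simpa [Complex.sub_im] using h1
  have hgw : GoodWeight (fun k => lam⁻¹ *
      ((((t k : ℝ) : ℂ) - lam)⁻¹ - (((t k : ℝ) : ℂ) - 0)⁻¹)) :=
    aux_good_comb lam⁻¹ _ _ (aux_good_resolvent t ht htop lam) (aux_good_resolvent t ht htop 0)
  obtain ⟨N0, hN0⟩ := eventually_atTop.1 (htop.eventually_ge_atTop 1)
  have hcw : ∀ k, N0 ≤ k → (((t k : ℝ) : ℂ) - lam)⁻¹
      = (lam⁻¹ * ((((t k : ℝ) : ℂ) - lam)⁻¹ - (((t k : ℝ) : ℂ) - 0)⁻¹)) * (t k : ℝ) := by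
    intro k hk
    have htk : ((t k : ℝ) : ℂ) ≠ 0 := by
      have : (1:ℝ) ≤ t k := hN0 k hk
      exact_mod_cast (by linarith : t k ≠ 0)
    rw [sub_zero]
    have h2 := hne k
    field_simp [h2]
    ring
  obtain ⟨z, hz⟩ := aux_conv hp e t x hx _ _ N0 hcw hgw
  have hzx : HasExpansion (fun k => (((t k : ℝ) : ℂ) - lam)⁻¹ * ((t k : ℝ) : ℂ)) e (z * x) :=
    aux_mul hp hsub e horth _ _ z x hz hx
  have hone : ∀ N, ∑ n ∈ Finset.range N, (1:ℂ) • e n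
      = (∑ n ∈ Finset.range N, ((((t n : ℝ) : ℂ) - lam)⁻¹ * ((t n : ℝ) : ℂ)) • e n)
        - lam • ∑ n ∈ Finset.range N, ((((t n : ℝ) : ℂ) - lam)⁻¹) • e n := by
    intro N
    rw [Finset.smul_sum, ← Finset.sum_sub_distrib]
    refine Finset.sum_congr rfl fun n _ => ?_
    rw [smul_smul, ← sub_smul]
    congr 1
    have h2 := hne n
    field_simp [h2]
  have hu : HasExpansion (fun _ => (1:ℂ)) e (z * x - lam • z) := by
    rw [HasExpansion]
    simp_rw [hone]
    exact hzx.sub (hz.const_smul lam)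
  set u := z * x - lam • z with hudef
  have hux : u * x = x := by
    have h1 : HasExpansion (fun k => (1:ℂ) * ((t k : ℝ) : ℂ)) e (u * x) :=
      aux_mul hp hsub e horth _ _ u x hu hx
    have h2 : HasExpansion (fun k => ((t k : ℝ) : ℂ)) e (u * x) := by
      simpa using h1
    exact tendsto_nhds_unique h2 hx
  have hfu : f u * lam = lam := by rw [hlam, ← hfm, hux]
  have hfu1 : f u = 1 := mul_right_cancel₀ hlam0 (by rw [hfu, one_mul])
  have hfzx : f (z * x) = f z * lam := by rw [hfm, hlam]
  have hulin : f u = f (z * x) - lam * f z := by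
    have h1 : f (z * x - lam • z) = f (z * x) - f (lam • z) :=
      (IsLinearMap.mk' f hf).map_sub _ _
    have h2 : f (lam • z) = lam * f z := by rw [hf.map_smul]; simp [smul_eq_mul]
    rw [hudef, h1, h2]
  exact one_ne_zero (α := ℂ) (by rw [← hfu1, hulin, hfzx]; ring)
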